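/- For a computably enumerable set A ⊆ ℕ: if there exists a computable, nondecreasing, unbounded function r and a computable r-good enumeration of A, then there exists a computable id-good enumeration of A (i.e., one that is r-good for r = identity). -/

import Mathlib

open Filter

noncomputable section

/-- A real is *regainingly approximable* if some computable nondecreasing rational
sequence converging to it is within `2⁻ⁿ` of it for infinitely many `n`. -/
def RegainApprox (α : ℝ) : Prop :=
  ∃ a : ℕ → ℚ, Computable a ∧ Monotone a ∧
    Tendsto (fun n => (a n : ℝ)) atTop (nhds α) ∧
    ∃ᶠ n in atTop, α - (a n : ℝ) < (2 : ℝ)⁻¹ ^ n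

def LeftComputable (α : ℝ) : Prop :=
  ∃ a : ℕ → ℚ, Computable a ∧ Monotone a ∧
    Tendsto (fun n => (a n : ℝ)) atTop (nhds α)

def ComputableReal (α : ℝ) : Prop :=
  ∃ a : ℕ → ℚ, Computable a ∧ ∀ n, |α - (a n : ℝ)| < (2 : ℝ)⁻¹ ^ n

/-- The real number `2^{-A}`. -/
def realOfSet (A : Set ℕ) : ℝ := ∑' a : A, (2 : ℝ)⁻¹ ^ ((a : ℕ) + 1)

/-- A set is regainingly approximable if it is c.e. and `2^{-A}` is regainingly approximable. -/
def RegainApproxSet (A : Set ℕ) : Prop :=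
  REPred (· ∈ A) ∧ RegainApprox (realOfSet A)

/-- `f` is an enumeration of `A`: `f k = n+1` means `n` is enumerated at stage `k`. -/
def IsEnum (f : ℕ → ℕ) (A : Set ℕ) : Prop := ∀ n, n ∈ A ↔ ∃ k, f k = n + 1

/-- The elements enumerated by `f` before stage `t`. -/
def EnumBy (f : ℕ → ℕ) (t : ℕ) : Set ℕ := {n | ∃ k < t, f k = n + 1}

/-- An enumeration `f` of `A` is `r`-good if for infinitely many `n`, all elements of
`A` below `n` are enumerated before stage `r n`. -/
def RGood (r : ℕ → ℕ) (f : ℕ → ℕ) (A : Set ℕ) : Prop :=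
  ∃ᶠ n in Filter.atTop, ∀ m < n, m ∈ A → m ∈ EnumBy f (r n)

namespace Stmt10Aux

/-- `∃ k < t, f k = v`, as a `Bool` via primitive recursion. -/
def exfB (f : ℕ → ℕ) (p : ℕ × ℕ) : Bool :=
  Nat.rec false (fun k acc => acc || (f k == p.2)) p.1

/-- `m` is certified to be in `A` with certificate index `N`:
`m < N` and `m` is enumerated by `f` before stage `r N`. -/
def memCb (f r : ℕ → ℕ) (p : ℕ × ℕ) : Bool :=
  decide (p.2 < p.1) && exfB f (r p.1, p.2 + 1)

/-- membership in a list, as Bool -/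
def memListB (p : List ℕ × ℕ) : Bool := decide (p.2 ∈ p.1)

/-- `m` is certified at `N` and not yet emitted (not in `prev`). -/
def pendB (f r : ℕ → ℕ) (p : (List ℕ × ℕ) × ℕ) : Bool :=
  memCb f r (p.1.2, p.2) && !(memListB (p.1.1, p.2))

/-- auxiliary bounded search -/
def hasNewAux (f r : ℕ → ℕ) (p : List ℕ × ℕ) (b : ℕ) : Bool :=
  Nat.rec false (fun m acc => acc || pendB f r ((p.1, p.2), m)) b

/-- there is some pending element with certificate index `N = p.2`. -/
def hasNewB (f r : ℕ → ℕ) (p : List ℕ × ℕ) : Bool :=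
  hasNewAux f r p p.2

def nextN (f r : ℕ → ℕ) (prev : List ℕ) : ℕ :=
  sInf {N | hasNewB f r (prev, N) = true}

def nextVal (f r : ℕ → ℕ) (prev : List ℕ) : ℕ :=
  sInf {m | pendB f r ((prev, nextN f r prev), m) = true}

def hist (f r : ℕ → ℕ) : ℕ → List ℕ :=
  fun t => Nat.rec [] (fun _ ih => ih ++ [nextVal f r ih]) t

def gFun (f r : ℕ → ℕ) (t : ℕ) : ℕ := nextVal f r (hist f r t) + 1

section spec

variable {f r : ℕ → ℕ}

theorem exfB_iff {t v : ℕ} : exfB f (t, v) = true ↔ ∃ k < t, f k = v := by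
  induction t with
  | zero => simp [exfB]
  | succ t ih =>
    simp only [exfB, Bool.or_eq_true, beq_iff_eq] at *
    constructor
    · rintro (h | h)
      · obtain ⟨k, hk, hfk⟩ := ih.1 h
        exact ⟨k, Nat.lt_succ_of_lt hk, hfk⟩
      · exact ⟨t, Nat.lt_succ_self t, h⟩
    · rintro ⟨k, hk, hfk⟩
      rcases Nat.lt_succ_iff_lt_or_eq.1 hk with hk' | rfl
      · exact Or.inl (ih.2 ⟨k, hk', hfk⟩)
      · exact Or.inr hfk

theorem memCb_iff {N m : ℕ} :
    memCb f r (N, m) = true ↔ m < N ∧ ∃ k < r N, f k = m + 1 := by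
  simp [memCb, exfB_iff]

theorem memListB_iff {l : List ℕ} {m : ℕ} : memListB (l, m) = true ↔ m ∈ l := by
  simp [memListB]

theorem pendB_iff {prev : List ℕ} {N m : ℕ} :
    pendB f r ((prev, N), m) = true ↔
      (m < N ∧ ∃ k < r N, f k = m + 1) ∧ m ∉ prev := by
  simp [pendB, memCb_iff, memListB, decide_eq_false_iff_not]

theorem hasNewAux_iff {prev : List ℕ} {N b : ℕ} :
    hasNewAux f r (prev, N) b = true ↔ ∃ m < b, pendB f r ((prev, N), m) = true := by
  induction b with
  | zero => simp [hasNewAux]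
  | succ b ih =>
    simp only [hasNewAux, Bool.or_eq_true] at *
    constructor
    · rintro (h | h)
      · obtain ⟨m, hm, hp⟩ := ih.1 h
        exact ⟨m, Nat.lt_succ_of_lt hm, hp⟩
      · exact ⟨b, Nat.lt_succ_self b, h⟩
    · rintro ⟨m, hm, hp⟩
      rcases Nat.lt_succ_iff_lt_or_eq.1 hm with hm' | rfl
      · exact Or.inl (ih.2 ⟨m, hm', hp⟩)
      · exact Or.inr hp

theorem hasNewB_iff {prev : List ℕ} {N : ℕ} :
    hasNewB f r (prev, N) = true ↔ ∃ m, pendB f r ((prev, N), m) = true := by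
  rw [hasNewB, hasNewAux_iff]
  constructor
  · rintro ⟨m, _, hp⟩; exact ⟨m, hp⟩
  · rintro ⟨m, hp⟩
    exact ⟨m, ((pendB_iff).1 hp).1.1, hp⟩

theorem memCb_mono {N N' m : ℕ} (hrM : Monotone r) (h : N ≤ N')
    (hm : memCb f r (N, m) = true) : memCb f r (N', m) = true := by
  rw [memCb_iff] at *
  obtain ⟨h1, k, hk, hfk⟩ := hm
  exact ⟨lt_of_lt_of_le h1 h, k, lt_of_lt_of_le hk (hrM h), hfk⟩

end spec

section main

variable {f r : ℕ → ℕ} {A : Set ℕ}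
variable (hfE : IsEnum f A) (hrM : Monotone r) (hrU : ∀ c : ℕ, ∃ n, c < r n)

include hfE in
theorem mem_of_memCb {N m : ℕ} (h : memCb f r (N, m) = true) : m ∈ A := by
  obtain ⟨-, k, -, hfk⟩ := memCb_iff.1 h
  exact (hfE m).2 ⟨k, hfk⟩

include hfE hrM hrU in
theorem cover {a : ℕ} (ha : a ∈ A) : ∃ N, memCb f r (N, a) = true := by
  obtain ⟨k, hk⟩ := (hfE a).1 ha
  obtain ⟨n₀, hn₀⟩ := hrU k
  refine ⟨max n₀ (a + 1), ?_⟩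
  rw [memCb_iff]
  exact ⟨lt_of_lt_of_le (Nat.lt_succ_self a) (le_max_right _ _),
    k, lt_of_lt_of_le hn₀ (hrM (le_max_left _ _)), hk⟩

include hfE hrM hrU in
theorem total (hInf : A.Infinite) (prev : List ℕ) :
    ∃ N, hasNewB f r (prev, N) = true := by
  obtain ⟨a, haA, ha⟩ := hInf.exists_notMem_finset prev.toFinset
  obtain ⟨N, hN⟩ := cover hfE hrM hrU haA
  refine ⟨N, hasNewB_iff.2 ⟨a, pendB_iff.2 ⟨memCb_iff.1 hN, ?_⟩⟩⟩
  simpa using ha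

variable (hInf : A.Infinite)

include hfE hrM hrU hInf in
theorem nextN_spec (prev : List ℕ) : hasNewB f r (prev, nextN f r prev) = true :=
  Nat.sInf_mem (total hfE hrM hrU hInf prev)

include hfE hrM hrU hInf in
theorem nextVal_spec (prev : List ℕ) :
    pendB f r ((prev, nextN f r prev), nextVal f r prev) = true := by
  obtain ⟨m, hm⟩ := hasNewB_iff.1 (nextN_spec hfE hrM hrU hInf prev)
  have hne : {m | pendB f r ((prev, nextN f r prev), m) = true}.Nonempty := ⟨m, hm⟩
  exact Nat.sInf_mem hne

theorem nextN_le {prev : List ℕ} {N : ℕ} (h : hasNewB f r (prev, N) = true) :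
    nextN f r prev ≤ N :=
  Nat.sInf_le h

include hfE hrM hrU hInf in
theorem nextVal_mem_A (prev : List ℕ) : nextVal f r prev ∈ A :=
  mem_of_memCb hfE (memCb_iff.2 ((pendB_iff.1 (nextVal_spec hfE hrM hrU hInf prev)).1))

include hfE hrM hrU hInf in
theorem nextVal_not_mem (prev : List ℕ) : nextVal f r prev ∉ prev :=
  (pendB_iff.1 (nextVal_spec hfE hrM hrU hInf prev)).2

include hfE hrM hrU hInf in
theorem nextVal_lt (prev : List ℕ) : nextVal f r prev < nextN f r prev :=
  (pendB_iff.1 (nextVal_spec hfE hrM hrU hInf prev)).1.1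

theorem hist_succ (t : ℕ) :
    hist f r (t + 1) = hist f r t ++ [nextVal f r (hist f r t)] := rfl

theorem length_hist (t : ℕ) : (hist f r t).length = t := by
  induction t with
  | zero => rfl
  | succ t ih => simp [hist_succ, ih]

theorem mem_hist_iff {m t : ℕ} :
    m ∈ hist f r t ↔ ∃ j < t, nextVal f r (hist f r j) = m := by
  induction t with
  | zero => simp [hist]
  | succ t ih =>
    rw [hist_succ]
    simp only [List.mem_append, List.mem_singleton, ih]
    constructor
    · rintro (⟨j, hj, hv⟩ | h)
      · exact ⟨j, Nat.lt_succ_of_lt hj, hv⟩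
      · exact ⟨t, Nat.lt_succ_self t, h.symm⟩
    · rintro ⟨j, hj, hv⟩
      rcases Nat.lt_succ_iff_lt_or_eq.1 hj with hj' | rfl
      · exact Or.inl ⟨j, hj', hv⟩
      · exact Or.inr hv.symm

theorem hist_mono {m t t' : ℕ} (h : t ≤ t') (hm : m ∈ hist f r t) :
    m ∈ hist f r t' := by
  rw [mem_hist_iff] at *
  obtain ⟨j, hj, hv⟩ := hm
  exact ⟨j, lt_of_lt_of_le hj h, hv⟩

include hfE hrM hrU hInf in
theorem hist_subset_A {m t : ℕ} (hm : m ∈ hist f r t) : m ∈ A := by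
  obtain ⟨j, -, hv⟩ := mem_hist_iff.1 hm
  exact hv ▸ nextVal_mem_A hfE hrM hrU hInf _

include hfE hrM hrU hInf in
theorem hist_nodup (t : ℕ) : (hist f r t).Nodup := by
  induction t with
  | zero => exact List.nodup_nil
  | succ t ih =>
    rw [hist_succ]
    refine List.Nodup.append ih (List.nodup_singleton _) ?_
    intro x hx hx'
    rw [List.mem_singleton] at hx'
    exact nextVal_not_mem hfE hrM hrU hInf (hist f r t) (hx' ▸ hx)

include hfE hrM hrU hInf in
theorem isEnum_gFun : IsEnum (gFun f r) A := by
  intro m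
  constructor
  · intro hm
    by_contra hno
    push_neg at hno
    have hnm : ∀ t, m ∉ hist f r t := by
      intro t hmem
      obtain ⟨j, -, hv⟩ := mem_hist_iff.1 hmem
      exact absurd (by rw [gFun, hv]) (hno j)
    obtain ⟨N₀, hN₀⟩ := cover hfE hrM hrU hm
    have hlt : ∀ t, nextVal f r (hist f r t) < N₀ := by
      intro t
      have hpend : pendB f r ((hist f r t, N₀), m) = true :=
        pendB_iff.2 ⟨memCb_iff.1 hN₀, hnm t⟩
      have hle : nextN f r (hist f r t) ≤ N₀ :=
        nextN_le (hasNewB_iff.2 ⟨m, hpend⟩)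
      exact lt_of_lt_of_le (nextVal_lt hfE hrM hrU hInf _) hle
    -- pigeonhole: hist (N₀+1) has N₀+1 distinct entries all < N₀
    have hsub : (hist f r (N₀ + 1)).toFinset ⊆ Finset.range N₀ := by
      intro x hx
      rw [List.mem_toFinset, mem_hist_iff] at hx
      obtain ⟨j, -, hv⟩ := hx
      exact Finset.mem_range.2 (hv ▸ hlt j)
    have hcard : (hist f r (N₀ + 1)).toFinset.card = N₀ + 1 := by
      rw [List.toFinset_card_of_nodup (hist_nodup hfE hrM hrU hInf _), length_hist]
    have := Finset.card_le_card hsub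
    rw [hcard, Finset.card_range] at this
    omega
  · rintro ⟨k, hk⟩
    have : nextVal f r (hist f r k) = m := by
      have := hk
      rw [gFun] at this
      omega
    exact this ▸ nextVal_mem_A hfE hrM hrU hInf _

include hfE hrM hrU hInf in
theorem good_transfer {n : ℕ} (hg : ∀ m < n, m ∈ A → ∃ k < r n, f k = m + 1) :
    ∀ m < n, m ∈ A → m ∈ hist f r n := by
  classical
  -- invariant
  have inv : ∀ t ≤ n, (∀ m < n, m ∈ A → m ∈ hist f r t) ∨
      (∀ x ∈ hist f r t, x ∈ A ∧ x < n) := by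
    intro t
    induction t with
    | zero => intro _; right; intro x hx; simp [hist] at hx
    | succ t ih =>
      intro ht
      rcases ih (Nat.le_of_succ_le ht) with hL | hR
      · left; intro m hm hmA; exact hist_mono (Nat.le_succ t) (hL m hm hmA)
      · by_cases hdone : ∀ m < n, m ∈ A → m ∈ hist f r t
        · left; intro m hm hmA; exact hist_mono (Nat.le_succ t) (hdone m hm hmA)
        · right
          push_neg at hdone
          obtain ⟨d, hdn, hdA, hdmem⟩ := hdone
          have hpend : pendB f r ((hist f r t, n), d) = true :=
            pendB_iff.2 ⟨⟨hdn, hg d hdn hdA⟩, hdmem⟩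
          have hle : nextN f r (hist f r t) ≤ n := nextN_le (hasNewB_iff.2 ⟨d, hpend⟩)
          intro x hx
          rw [hist_succ, List.mem_append, List.mem_singleton] at hx
          rcases hx with hx | rfl
          · exact hR x hx
          · exact ⟨nextVal_mem_A hfE hrM hrU hInf _,
              lt_of_lt_of_le (nextVal_lt hfE hrM hrU hInf _) hle⟩
  rcases inv n le_rfl with hL | hR
  · exact hL
  · -- hist n has n distinct elements, all in A ∩ [0,n); that set has ≤ n elements
    intro m hm hmA
    have hsub : (hist f r n).toFinset ⊆ (Finset.range n).filter (fun x => x ∈ A) := by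
      intro x hx
      rw [List.mem_toFinset] at hx
      obtain ⟨hxA, hxn⟩ := hR x hx
      exact Finset.mem_filter.2 ⟨Finset.mem_range.2 hxn, hxA⟩
    have hcard : (hist f r n).toFinset.card = n := by
      rw [List.toFinset_card_of_nodup (hist_nodup hfE hrM hrU hInf _), length_hist]
    have hcard2 : ((Finset.range n).filter (fun x => x ∈ A)).card ≤ n := by
      calc ((Finset.range n).filter (fun x => x ∈ A)).card
          ≤ (Finset.range n).card := Finset.card_filter_le _ _
        _ = n := Finset.card_range n
    have heq : (hist f r n).toFinset = (Finset.range n).filter (fun x => x ∈ A) :=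
      Finset.eq_of_subset_of_card_le hsub (by rw [hcard]; exact hcard2)
    have : m ∈ (hist f r n).toFinset := by
      rw [heq]
      exact Finset.mem_filter.2 ⟨Finset.mem_range.2 hm, hmA⟩
    exact List.mem_toFinset.1 this

end main

section computability

variable {f r : ℕ → ℕ}

theorem exfB_computable (hf : Computable f) : Computable (exfB f) := by
  have hh : Computable fun q : (ℕ × ℕ) × ℕ × Bool => q.2.2 || (f q.2.1 == q.1.2) :=
    Primrec.or.to_comp.comp (Computable.snd.comp Computable.snd)
      (Primrec.beq.to_comp.comp (hf.comp (Computable.fst.comp Computable.snd))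
        (Computable.snd.comp Computable.fst))
  have := Computable.nat_rec (f := fun p : ℕ × ℕ => p.1) (g := fun _ : ℕ × ℕ => false)
    (h := fun a s => s.2 || (f s.1 == a.2)) Computable.fst (Computable.const false) hh.to₂
  exact this.of_eq fun p => rfl

theorem memCb_computable (hf : Computable f) (hr : Computable r) :
    Computable (memCb f r) := by
  have h1 : Computable fun p : ℕ × ℕ => decide (p.2 < p.1) :=
    Primrec.nat_lt.decide.to_comp.comp Computable.snd Computable.fst
  have h2 : Computable fun p : ℕ × ℕ => exfB f (r p.1, p.2 + 1) :=
    (exfB_computable hf).comp ((hr.comp Computable.fst).pair (Computable.succ.comp Computable.snd))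
  exact Primrec.and.to_comp.comp h1 h2

theorem memListB_computable : Computable memListB := by
  have h : Primrec fun p : List ℕ × ℕ => decide (p.1.idxOf p.2 < p.1.length) :=
    Primrec.nat_lt.decide.comp (Primrec.list_idxOf.comp Primrec.snd Primrec.fst)
      (Primrec.list_length.comp Primrec.fst)
  exact (h.of_eq fun p => by simp [memListB, List.idxOf_lt_length_iff]).to_comp

theorem pendB_computable (hf : Computable f) (hr : Computable r) :
    Computable (pendB f r) := by
  have h1 : Computable fun p : (List ℕ × ℕ) × ℕ => memCb f r (p.1.2, p.2) :=
    (memCb_computable hf hr).comp ((Computable.snd.comp Computable.fst).pair Computable.snd)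
  have h2 : Computable fun p : (List ℕ × ℕ) × ℕ => !(memListB (p.1.1, p.2)) :=
    Primrec.not.to_comp.comp
      (memListB_computable.comp ((Computable.fst.comp Computable.fst).pair Computable.snd))
  exact Primrec.and.to_comp.comp h1 h2

theorem hasNewB_computable (hf : Computable f) (hr : Computable r) :
    Computable (hasNewB f r) := by
  have hh : Computable fun q : ((List ℕ × ℕ) × ℕ) × ℕ × Bool =>
      q.2.2 || pendB f r ((q.1.1.1, q.1.1.2), q.2.1) :=
    Primrec.or.to_comp.comp (Computable.snd.comp Computable.snd)
      ((pendB_computable hf hr).comp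
        (((Computable.fst.comp (Computable.fst.comp Computable.fst)).pair
          (Computable.snd.comp (Computable.fst.comp Computable.fst))).pair
          (Computable.fst.comp Computable.snd)))
  have haux : Computable fun q : (List ℕ × ℕ) × ℕ => hasNewAux f r q.1 q.2 := by
    have := Computable.nat_rec (f := fun q : (List ℕ × ℕ) × ℕ => q.2)
      (g := fun _ : (List ℕ × ℕ) × ℕ => false)
      (h := fun a s => s.2 || pendB f r ((a.1.1, a.1.2), s.1)) Computable.snd
      (Computable.const false) hh.to₂
    exact this.of_eq fun p => rfl
  exact (haux.comp (Computable.id.pair Computable.snd)).of_eq fun p => rfl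

section

variable {A : Set ℕ}
variable (hfE : IsEnum f A) (hrM : Monotone r) (hrU : ∀ c : ℕ, ∃ n, c < r n)
variable (hInf : A.Infinite)

include hfE hrM hrU hInf in
theorem nextN_computable (hf : Computable f) (hr : Computable r) :
    Computable (nextN f r) := by
  have hb : Computable (hasNewB f r) := hasNewB_computable hf hr
  have hb2 : Computable₂ fun (prev : List ℕ) (N : ℕ) => hasNewB f r (prev, N) := hb.to₂
  have hpart : Partrec fun prev : List ℕ =>
      Nat.rfind fun N => (fun N => hasNewB f r (prev, N) : ℕ →. Bool) N :=
    Partrec.rfind hb2.partrec₂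
  refine hpart.of_eq_tot fun prev => ?_
  refine Nat.mem_rfind.2 ?_
  constructor
  · exact Part.mem_some_iff.2 (nextN_spec hfE hrM hrU hInf prev).symm
  · intro m hm
    have h' : hasNewB f r (prev, m) ≠ true := Nat.notMem_of_lt_sInf hm
    exact Part.mem_some_iff.2 (Bool.eq_false_iff.2 h').symm

include hfE hrM hrU hInf in
theorem nextVal_computable (hf : Computable f) (hr : Computable r) :
    Computable (nextVal f r) := by
  have hp : Computable fun q : List ℕ × ℕ => pendB f r ((q.1, nextN f r q.1), q.2) :=
    (pendB_computable hf hr).comp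
      ((Computable.fst.pair ((nextN_computable hfE hrM hrU hInf hf hr).comp Computable.fst)).pair
        Computable.snd)
  have hp2 : Computable₂ fun (prev : List ℕ) (m : ℕ) =>
      pendB f r ((prev, nextN f r prev), m) := hp.to₂
  have hpart : Partrec fun prev : List ℕ =>
      Nat.rfind fun m => (fun m => pendB f r ((prev, nextN f r prev), m) : ℕ →. Bool) m :=
    Partrec.rfind hp2.partrec₂
  refine hpart.of_eq_tot fun prev => ?_
  refine Nat.mem_rfind.2 ?_
  constructor
  · exact Part.mem_some_iff.2 (nextVal_spec hfE hrM hrU hInf prev).symm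
  · intro m hm
    have h' : pendB f r ((prev, nextN f r prev), m) ≠ true := Nat.notMem_of_lt_sInf hm
    exact Part.mem_some_iff.2 (Bool.eq_false_iff.2 h').symm

theorem hist_eq_map (t : ℕ) :
    hist f r t = (List.range t).map fun k => nextVal f r (hist f r k) := by
  induction t with
  | zero => rfl
  | succ t ih => rw [hist_succ, List.range_succ, List.map_append, ← ih]; rfl

include hfE hrM hrU hInf in
theorem gFun_computable (hf : Computable f) (hr : Computable r) :
    Computable (gFun f r) := by
  have hnv : Computable (nextVal f r) := nextVal_computable hfE hrM hrU hInf hf hr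
  have hmapPred : Computable fun l : List ℕ => l.map fun x => x - 1 := by
    have : Primrec fun l : List ℕ => l.map fun x => x - 1 :=
      Primrec.list_map Primrec.id ((Primrec.pred.comp Primrec.snd).to₂)
    exact this.to_comp
  have hg2 : Computable₂ fun (_ : ℕ) (l : List ℕ) =>
      (some (nextVal f r (l.map fun x => x - 1) + 1) : Option ℕ) :=
    (Computable.option_some.comp
      (Computable.succ.comp (hnv.comp (hmapPred.comp Computable.snd)))).to₂
  have H : ∀ (a n : ℕ),
      (fun (_ : ℕ) (l : List ℕ) => (some (nextVal f r (l.map fun x => x - 1) + 1) : Option ℕ)) a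
        ((List.range n).map ((fun (_ : ℕ) (t : ℕ) => gFun f r t) a)) =
        some ((fun (_ : ℕ) (t : ℕ) => gFun f r t) a n) := by
    intro a n
    simp only [List.map_map]
    have : ((fun x => x - 1) ∘ gFun f r) = fun k => nextVal f r (hist f r k) := by
      funext k; simp [gFun, Function.comp]
    rw [this, ← hist_eq_map]
    rfl
  have hF := Computable.nat_strong_rec (fun (_ : ℕ) (t : ℕ) => gFun f r t) hg2 H
  exact hF.comp (Computable.const 0) Computable.id

end

end computability

end Stmt10Aux


namespace Stmt10Aux

section finiteCase

variable {A : Set ℕ}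

theorem finite_case (hFin : A.Finite) :
    ∃ g : ℕ → ℕ, Computable g ∧ IsEnum g A ∧ RGood id g A := by
  classical
  set L : List ℕ := hFin.toFinset.toList.map (· + 1) with hL
  refine ⟨fun t => L.getD t 0, ?_, ?_, ?_⟩
  · exact ((Primrec.list_getD 0).comp (Primrec.const L) Primrec.id).to_comp
  · intro m
    constructor
    · intro hm
      have hmem : m + 1 ∈ L := by
        rw [hL]
        exact List.mem_map.2 ⟨m, Finset.mem_toList.2 (hFin.mem_toFinset.2 hm), rfl⟩
      obtain ⟨i, hi, hig⟩ := List.mem_iff_getElem.1 hmem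
      exact ⟨i, by show L.getD i 0 = m + 1; rw [List.getD_eq_getElem L 0 hi, hig]⟩
    · rintro ⟨k, hk⟩
      by_cases hkL : k < L.length
      · simp only at hk
        rw [List.getD_eq_getElem L 0 hkL] at hk
        have : L[k] ∈ L := List.getElem_mem hkL
        rw [hk] at this
        obtain ⟨a, haA, ha⟩ := List.mem_map.1 this
        have : a = m := by omega
        subst this
        exact hFin.mem_toFinset.1 (Finset.mem_toList.1 haA)
      · simp only at hk
        rw [List.getD_eq_default L 0 (le_of_not_gt hkL)] at hk
        omega
  · rw [RGood, Filter.frequently_atTop]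
    intro a
    refine ⟨max a L.length, le_max_left _ _, ?_⟩
    intro m _ hmA
    have hmem : m + 1 ∈ L := by
      rw [hL]
      exact List.mem_map.2 ⟨m, Finset.mem_toList.2 (hFin.mem_toFinset.2 hmA), rfl⟩
    obtain ⟨i, hi, hig⟩ := List.mem_iff_getElem.1 hmem
    exact ⟨i, lt_of_lt_of_le hi (le_max_right _ _), by
      show L.getD i 0 = m + 1
      rw [List.getD_eq_getElem L 0 hi, hig]⟩

end finiteCase

end Stmt10Aux

open Stmt10Aux in
/-- If `A` has some computable `r`-good enumeration for a computable nondecreasing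
unbounded `r`, then `A` has a computable `id`-good enumeration. -/
theorem stmt_10 (A : Set ℕ) (hA : REPred (· ∈ A))
    (h : ∃ f r : ℕ → ℕ, Computable f ∧ IsEnum f A ∧
      Computable r ∧ Monotone r ∧ (∀ c : ℕ, ∃ n, c < r n) ∧ RGood r f A) :
    ∃ g : ℕ → ℕ, Computable g ∧ IsEnum g A ∧ RGood id g A := by
  classical
  obtain ⟨f, r, hf, hfE, hr, hrM, hrU, hGood⟩ := h
  by_cases hInf : A.Infinite
  · refine ⟨gFun f r, gFun_computable hfE hrM hrU hInf hf hr,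
      isEnum_gFun hfE hrM hrU hInf, ?_⟩
    rw [RGood, Filter.frequently_atTop] at hGood ⊢
    intro a
    obtain ⟨n, hn, hgood⟩ := hGood a
    refine ⟨n, hn, ?_⟩
    intro m hm hmA
    have hmh : m ∈ hist f r n :=
      good_transfer hfE hrM hrU hInf (fun m' hm' hm'A => hgood m' hm' hm'A) m hm hmA
    obtain ⟨j, hj, hv⟩ := mem_hist_iff.1 hmh
    exact ⟨j, hj, by rw [gFun, hv]⟩
  · exact finite_case (Set.not_infinite.1 hInf)
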